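/- Let d ≥ 1, L > 0, θ ≥ 1, let X ⊆ ℝ^d be nonempty, closed and convex, let f : ℝ^d → ℝ be convex and L-Lipschitz, let x₀, x★ ∈ X, r_ε > 0, and let (g_k)_{k≥0} be vectors in ℝ^d with g₀ ≠ 0 and ‖g_k‖ ≤ Ld for all k. Define recursively r̄_k = max(r_ε, max_{j≤k} ‖x_j − x₀‖), G_k = Σ_{i=0}^{k} ‖g_i‖², η_k = r̄_k/√(G_k), μ_k = r̄_k √(d/(k+1)), and x_{k+1} = Π_X(x_k − η_k g_k). Set Δ_k = ∇f_{μ_k}(x_k) − g_k, s₀ = ‖x₀ − x★‖, s̄_t = max_{k≤t} ‖x_k − x★‖, and x̄_t = (Σ_{k=0}^{t−1} r̄_k)^{−1} Σ_{k=0}^{t−1} r̄_k x_k. Fix t ≥ 1 and assume |Σ_{k=0}^{t−1} r̄_k ⟨Δ_k, x_k − x★⟩| ≤ 8 r̄_{t−1} s̄_{t−1} √(θ G_{t−1} + 4 L² d² θ²). Then f(x̄_t) − f(x★) ≤ 16 θ (r̄_t + s₀)(√(G_{t−1}) + L d + L √(d t)) / (Σ_{k=0}^{t−1} r̄_k / r̄_t).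 -/

import Mathlib

open MeasureTheory Metric Finset
open scoped RealInnerProductSpace

/-- The uniform probability measure on the closed Euclidean unit ball in `ℝ^d`. -/
noncomputable def ballUniform (d : ℕ) : Measure (EuclideanSpace ℝ (Fin d)) :=
  (volume (Metric.closedBall (0 : EuclideanSpace ℝ (Fin d)) 1))⁻¹ •
    volume.restrict (Metric.closedBall 0 1)

/-- The ball-smoothed function `f_μ(x) = E_{u ∼ U(B^d)} [f (x + μ u)]`. -/
noncomputable def smoothed (d : ℕ) (f : EuclideanSpace ℝ (Fin d) → ℝ) (μ : ℝ)
    (x : EuclideanSpace ℝ (Fin d)) : ℝ :=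
  ∫ u, f (x + μ • u) ∂(ballUniform d)

/-- The uniform (rotation-invariant) probability measure on the unit sphere `S^{d-1}`,
realized as the pushforward of the uniform measure on the unit ball under radial
normalization `u ↦ u / ‖u‖`. -/
noncomputable def sphereUniform (d : ℕ) : Measure (EuclideanSpace ℝ (Fin d)) :=
  (ballUniform d).map (fun u => ‖u‖⁻¹ • u)

section SumLemmas

lemma abel_bound (c A : ℕ → ℝ) (P : ℝ) (h0 : 0 ≤ c 0) (hmono : ∀ k, c k ≤ c (k + 1)) :
    ∀ t, 1 ≤ t → (∀ k, k < t → A k ≤ P) →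
      ∑ k ∈ range t, c k * (A k - A (k + 1)) ≤ c (t - 1) * (P - A t) := by
  have hcnn : ∀ k, 0 ≤ c k := fun k => by
    induction k with
    | zero => exact h0
    | succ n ih => exact ih.trans (hmono n)
  intro t
  induction t with
  | zero => omega
  | succ n ih =>
    intro _ hP
    rcases Nat.eq_or_lt_of_le (Nat.one_le_iff_ne_zero.2 (Nat.succ_ne_zero n)) with h1 | h1
    · -- n = 0
      have hn : n = 0 := by omega
      subst hn
      have h2 := hP 0 (by omega)
      simp only [Nat.zero_add, Finset.sum_range_one, Nat.add_sub_cancel]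
      nlinarith [hcnn 0]
    · have hn : 1 ≤ n := by omega
      have ihn := ih hn (fun k hk => hP k (by omega))
      rw [Finset.sum_range_succ]
      have hstep : c (n - 1) * (P - A n) + c n * (A n - A (n + 1)) ≤
          c n * (P - A (n + 1)) := by
        have hc : c (n - 1) ≤ c n := by
          have := hmono (n - 1)
          rwa [Nat.sub_add_cancel hn] at this
        have hA : A n ≤ P := hP n (by omega)
        nlinarith [mul_le_mul_of_nonneg_left hA (sub_nonneg.2 hc), hcnn (n - 1)]
      calc ∑ k ∈ range n, c k * (A k - A (k + 1)) + c n * (A n - A (n + 1))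
          ≤ c (n - 1) * (P - A n) + c n * (A n - A (n + 1)) := by linarith
        _ ≤ c n * (P - A (n + 1)) := hstep
        _ = c (n + 1 - 1) * (P - A (n + 1)) := by norm_num

lemma sum_div_sqrt_le (b : ℕ → ℝ) (hb : ∀ k, 0 ≤ b k) (hb0 : 0 < b 0) :
    ∀ t, 1 ≤ t →
      ∑ k ∈ range t, b k / Real.sqrt (∑ i ∈ range (k + 1), b i) ≤
        2 * Real.sqrt (∑ i ∈ range t, b i) := by
  have hBpos : ∀ m, 1 ≤ m → 0 < ∑ i ∈ range m, b i := fun m hm => by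
    have : b 0 ≤ ∑ i ∈ range m, b i :=
      Finset.single_le_sum (fun i _ => hb i) (Finset.mem_range.2 (by omega))
    linarith
  intro t
  induction t with
  | zero => omega
  | succ n ih =>
    intro _
    rcases Nat.eq_zero_or_pos n with hn | hn
    · subst hn
      simp only [range_one, sum_singleton, zero_add]
      rw [Real.div_sqrt]
      nlinarith [Real.sqrt_nonneg (b 0)]
    · have ihn := ih hn
      rw [Finset.sum_range_succ]
      set p := Real.sqrt (∑ i ∈ range n, b i) with hp
      set q := Real.sqrt (∑ i ∈ range (n + 1), b i) with hq
      have hpq : p ≤ q := Real.sqrt_le_sqrt (by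
        rw [Finset.sum_range_succ]; nlinarith [hb n])
      have hq0 : 0 < q := Real.sqrt_pos.2 (hBpos (n + 1) (by omega))
      have hp0 : 0 ≤ p := Real.sqrt_nonneg _
      have hpsq : p ^ 2 = ∑ i ∈ range n, b i := Real.sq_sqrt (hBpos n hn).le
      have hqsq : q ^ 2 = ∑ i ∈ range (n + 1), b i := Real.sq_sqrt (hBpos (n + 1) (by omega)).le
      have hbn : b n = q ^ 2 - p ^ 2 := by
        rw [hpsq, hqsq, Finset.sum_range_succ]; ring
      have hkey : b n / q ≤ 2 * (q - p) := by
        rw [div_le_iff₀ hq0, hbn]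
        nlinarith [sq_nonneg (q - p)]
      linarith

lemma sum_inv_sqrt_le (t : ℕ) (ht : 1 ≤ t) :
    ∑ k ∈ range t, 1 / Real.sqrt ((k : ℝ) + 1) ≤ 2 * Real.sqrt t := by
  have := sum_div_sqrt_le (fun _ => 1) (fun _ => zero_le_one) one_pos t ht
  simpa using this

end SumLemmas

section Helpers
variable {d : ℕ}
local notation "E" => EuclideanSpace ℝ (Fin d)

lemma volB_pos : 0 < volume (Metric.closedBall (0 : E) 1) :=
  lt_of_lt_of_le (measure_ball_pos _ _ one_pos) (measure_mono ball_subset_closedBall)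

lemma volB_ne_top : volume (Metric.closedBall (0 : E) 1) ≠ ⊤ :=
  (isCompact_closedBall _ _).measure_lt_top.ne

instance : IsProbabilityMeasure (ballUniform d) := by
  constructor
  rw [ballUniform]
  simp only [Measure.smul_apply, Measure.restrict_apply MeasurableSet.univ, Set.univ_inter,
    smul_eq_mul]
  exact ENNReal.inv_mul_cancel volB_pos.ne' volB_ne_top

lemma ae_ballUniform {p : E → Prop} (h : ∀ᵐ u ∂(volume : Measure E), p u) :
    ∀ᵐ u ∂(ballUniform d), p u := by
  rw [ballUniform]
  exact Measure.ae_smul_measure (ae_restrict_of_ae h) _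

lemma ae_ballUniform_norm_le : ∀ᵐ u ∂(ballUniform d), ‖u‖ ≤ 1 := by
  rw [ballUniform]
  refine Measure.ae_smul_measure ?_ _
  filter_upwards [ae_restrict_mem measurableSet_closedBall] with u hu
  simpa [mem_closedBall_zero_iff] using hu

lemma integrable_comp_ball {C : NNReal} {f : E → ℝ} (hf : LipschitzWith C f) (x : E) (μ : ℝ) :
    Integrable (fun u => f (x + μ • u)) (ballUniform d) := by
  rw [ballUniform]
  refine Integrable.smul_measure ?_ (ENNReal.inv_ne_top.2 volB_pos.ne')
  exact ((hf.continuous.comp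
    (continuous_const.add (continuous_id.const_smul μ))).continuousOn).integrableOn_compact
    (isCompact_closedBall _ _)

lemma abs_smoothed_sub {C : NNReal} {f : E → ℝ} (hf : LipschitzWith C f) {μ : ℝ} (hμ : 0 ≤ μ)
    (x : E) : |smoothed d f μ x - f x| ≤ C * μ := by
  have h1 : smoothed d f μ x - f x = ∫ u, (f (x + μ • u) - f x) ∂(ballUniform d) := by
    rw [integral_sub (integrable_comp_ball hf x μ) (integrable_const _), integral_const]
    simp [smoothed]
  rw [h1, ← Real.norm_eq_abs]
  have h2 : ∀ᵐ u ∂(ballUniform d), ‖f (x + μ • u) - f x‖ ≤ C * μ := by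
    filter_upwards [ae_ballUniform_norm_le] with u hu
    have h3 := hf.dist_le_mul (x + μ • u) x
    rw [Real.dist_eq] at h3
    have h4 : dist (x + μ • u) x = |μ| * ‖u‖ := by
      simp [dist_eq_norm, norm_smul]
    rw [h4, abs_of_nonneg hμ] at h3
    refine h3.trans ?_
    nlinarith [mul_nonneg C.coe_nonneg hμ, norm_nonneg u]
  simpa using norm_integral_le_of_norm_le_const h2

lemma smoothed_convexOn {C : NNReal} {f : E → ℝ} (hf : LipschitzWith C f)
    (hconv : ConvexOn ℝ Set.univ f) (μ : ℝ) :
    ConvexOn ℝ Set.univ (smoothed d f μ) := by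
  refine ⟨convex_univ, fun x _ y _ a b ha hb hab => ?_⟩
  have key : ∀ u : E, f (a • x + b • y + μ • u) ≤ a * f (x + μ • u) + b * f (y + μ • u) := by
    intro u
    have h : a • x + b • y + μ • u = a • (x + μ • u) + b • (y + μ • u) := by
      rw [smul_add, smul_add, add_add_add_comm, ← add_smul, hab, one_smul]
    rw [h]
    exact hconv.2 trivial trivial ha hb hab
  have h1 : smoothed d f μ (a • x + b • y) ≤
      ∫ u, (a * f (x + μ • u) + b * f (y + μ • u)) ∂(ballUniform d) :=
    integral_mono (integrable_comp_ball hf _ μ)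
      (((integrable_comp_ball hf x μ).const_mul a).add
        ((integrable_comp_ball hf y μ).const_mul b)) key
  rw [integral_add ((integrable_comp_ball hf x μ).const_mul a)
    ((integrable_comp_ball hf y μ).const_mul b), integral_const_mul, integral_const_mul] at h1
  simpa [smoothed, smul_eq_mul] using h1

lemma lipschitz_comp_translate {C : NNReal} {f : E → ℝ} (hf : LipschitzWith C f) (c : E) :
    LipschitzWith C (fun x => f (x + c)) := by
  have h1 : LipschitzWith 1 (fun x : E => x + c) :=
    LipschitzWith.of_dist_le_mul (fun x y => by simp [dist_add_right])
  simpa [Function.comp_def] using hf.comp h1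

lemma smoothed_differentiableAt {C : NNReal} {f : E → ℝ} (hf : LipschitzWith C f)
    {μ : ℝ} (hμ : μ ≠ 0) (x₀ : E) : DifferentiableAt ℝ (smoothed d f μ) x₀ := by
  have key : ∀ᵐ u ∂(volume : Measure E), DifferentiableAt ℝ f (x₀ + μ • u) := by
    have hN := hf.ae_differentiableAt (μ := (volume : Measure E))
    rw [ae_iff] at hN ⊢
    have hset : {u : E | ¬ DifferentiableAt ℝ f (x₀ + μ • u)} =
        (μ • ·) ⁻¹' ((x₀ + ·) ⁻¹' {v : E | ¬ DifferentiableAt ℝ f v}) := rfl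
    rw [hset, Measure.addHaar_preimage_smul volume hμ, measure_preimage_add, hN, mul_zero]
  have hdiff : ∀ᵐ u ∂(ballUniform d),
      HasFDerivAt (fun x => f (x + μ • u)) (fderiv ℝ f (x₀ + μ • u)) x₀ := by
    filter_upwards [ae_ballUniform key] with u hu
    have h1 : HasFDerivAt (fun x : E => x + μ • u) (ContinuousLinearMap.id ℝ _) x₀ :=
      (hasFDerivAt_id x₀).add_const (μ • u)
    have h2 := hu.hasFDerivAt.comp x₀ h1
    simpa [Function.comp_def] using h2
  have hlipB : ∀ᵐ u ∂(ballUniform d), LipschitzOnWith (Real.nnabs ((C : ℝ)))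
      (fun x => f (x + μ • u)) (ball x₀ 1) := by
    refine Filter.Eventually.of_forall (fun u => ?_)
    simp only [Real.nnabs_coe]
    exact (lipschitz_comp_translate hf (μ • u)).lipschitzOnWith
  have hF'meas : AEStronglyMeasurable (fun u => fderiv ℝ f (x₀ + μ • u)) (ballUniform d) := by
    refine Measurable.aestronglyMeasurable ?_
    exact (measurable_fderiv ℝ f).comp
      ((continuous_const.add (continuous_id.const_smul μ)).measurable)
  have hmeas : ∀ᶠ x' in nhds x₀,
      AEStronglyMeasurable (fun u : E => f (x' + μ • u)) (ballUniform d) :=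
    Filter.Eventually.of_forall (fun x' =>
      (hf.continuous.comp
        (continuous_const.add (continuous_id.const_smul μ))).aestronglyMeasurable)
  have main := hasFDerivAt_integral_of_dominated_loc_of_lip (μ := ballUniform d)
    (F := fun x' u => f (x' + μ • u)) (F' := fun u => fderiv ℝ f (x₀ + μ • u))
    (bound := fun _ => (C : ℝ)) (ball_mem_nhds x₀ one_pos) hmeas (integrable_comp_ball hf x₀ μ) hF'meas hlipB
    (integrable_const _) hdiff
  exact main.2.differentiableAt

lemma inner_gradient_eq (φ : E → ℝ) (x w : E) :
    ⟪gradient φ x, w⟫ = fderiv ℝ φ x w := by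
  rw [gradient]
  exact InnerProductSpace.toDual_symm_apply

lemma convexOn_grad_ineq {φ : E → ℝ} (hconv : ConvexOn ℝ Set.univ φ)
    {x : E} (hdiff : DifferentiableAt ℝ φ x) (y : E) :
    φ x - φ y ≤ ⟪gradient φ x, x - y⟫ := by
  set v := y - x with hv
  have hg : HasDerivAt (fun s : ℝ => φ (x + s • v)) (fderiv ℝ φ x v) 0 := by
    have h2 : HasDerivAt (fun s : ℝ => x + s • v) v 0 := by
      simpa using ((hasDerivAt_id (0:ℝ)).smul_const v).const_add x
    have h3 : HasFDerivAt φ (fderiv ℝ φ x) (x + (0:ℝ) • v) := by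
      simpa using hdiff.hasFDerivAt
    simpa [Function.comp_def] using h3.comp_hasDerivAt 0 h2
  have hslope : ∀ s ∈ Set.Ioc (0:ℝ) 1,
      (φ (x + s • v) - φ x) / s ≤ φ y - φ x := by
    intro s hs
    rw [div_le_iff₀ hs.1]
    have hcomb : x + s • v = (1 - s) • x + s • y := by
      rw [hv]; rw [smul_sub, sub_smul, one_smul]; abel
    have := hconv.2 (Set.mem_univ x) (Set.mem_univ y) (by linarith [hs.2] : (0:ℝ) ≤ 1 - s)
      hs.1.le (by ring)
    rw [← hcomb] at this
    have h4 : φ (x + s • v) ≤ (1 - s) * φ x + s * φ y := by simpa [smul_eq_mul] using this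
    nlinarith
  have htends : Filter.Tendsto (fun s : ℝ => (φ (x + s • v) - φ x) / s)
      (nhdsWithin 0 (Set.Ioi 0)) (nhds (fderiv ℝ φ x v)) := by
    have h5 := hasDerivAt_iff_tendsto_slope.mp hg
    have h6 : (fun s : ℝ => slope (fun s : ℝ => φ (x + s • v)) 0 s)
        = fun s => (φ (x + s • v) - φ x) / s := by
      funext s; simp [slope, sub_zero, div_eq_inv_mul]
    rw [← h6]
    exact h5.mono_left (nhdsWithin_mono _ (fun s hs => ne_of_gt hs))
  have hle : fderiv ℝ φ x v ≤ φ y - φ x := by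
    refine le_of_tendsto htends ?_
    filter_upwards [Ioc_mem_nhdsGT_of_mem (Set.left_mem_Ico.2 one_pos)] with s hs
    exact hslope s hs
  have h7 : ⟪gradient φ x, x - y⟫ = fderiv ℝ φ x (x - y) := inner_gradient_eq φ x (x - y)
  have h8 : fderiv ℝ φ x (x - y) = - fderiv ℝ φ x v := by
    have h9 : x - y = -v := by rw [hv]; abel
    rw [h9, map_neg]
  linarith [h7, h8, hle]

lemma proj_nonexpansive {X : Set E} (hXconv : Convex ℝ X)
    (proj : E → E) (hprojMem : ∀ z, proj z ∈ X)
    (hprojMin : ∀ z, ∀ y ∈ X, ‖z - proj z‖ ≤ ‖z - y‖) (z : E) {w : E} (hw : w ∈ X) :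
    ‖proj z - w‖ ≤ ‖z - w‖ := by
  haveI : Nonempty X := ⟨⟨proj z, hprojMem z⟩⟩
  have hbdd : BddBelow (Set.range fun y : X => ‖z - y‖) :=
    ⟨0, fun b ⟨y, hy⟩ => hy ▸ norm_nonneg _⟩
  have hinf : ‖z - proj z‖ = ⨅ y : X, ‖z - y‖ := by
    refine le_antisymm (le_ciInf fun y => hprojMin z y y.2) ?_
    exact ciInf_le hbdd ⟨proj z, hprojMem z⟩
  have hip : ⟪z - proj z, w - proj z⟫ ≤ 0 :=
    (norm_eq_iInf_iff_real_inner_le_zero hXconv (hprojMem z)).mp hinf w hw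
  have hexp : ‖z - w‖ ^ 2 = ‖z - proj z‖ ^ 2 + 2 * ⟪z - proj z, proj z - w⟫ + ‖proj z - w‖ ^ 2 := by
    have h1 : z - w = (z - proj z) + (proj z - w) := by abel
    rw [h1, norm_add_sq_real]
  have hip2 : (0:ℝ) ≤ ⟪z - proj z, proj z - w⟫ := by
    have h2 : proj z - w = -(w - proj z) := by abel
    rw [h2, inner_neg_right]; linarith
  have hsq : ‖proj z - w‖ ^ 2 ≤ ‖z - w‖ ^ 2 := by nlinarith [sq_nonneg ‖z - proj z‖]
  exact (abs_le_of_sq_le_sq' hsq (norm_nonneg _)).2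

end Helpers

set_option maxHeartbeats 4000000 in
theorem stmt9 (d : ℕ) (hd : 1 ≤ d) (L : ℝ) (hL : 0 < L) (θ : ℝ) (hθ : 1 ≤ θ)
    (X : Set (EuclideanSpace ℝ (Fin d))) (hXne : X.Nonempty) (hXcl : IsClosed X)
    (hXconv : Convex ℝ X)
    (f : EuclideanSpace ℝ (Fin d) → ℝ)
    (hconv : ConvexOn ℝ Set.univ f)
    (hlip : ∀ x y, |f x - f y| ≤ L * ‖x - y‖)
    -- `proj` is the Euclidean metric projection onto `X`
    (proj : EuclideanSpace ℝ (Fin d) → EuclideanSpace ℝ (Fin d))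
    (hprojMem : ∀ z, proj z ∈ X)
    (hprojMin : ∀ z, ∀ y ∈ X, ‖z - proj z‖ ≤ ‖z - y‖)
    (x : ℕ → EuclideanSpace ℝ (Fin d)) (xstar : EuclideanSpace ℝ (Fin d))
    (hx0 : x 0 ∈ X) (hxstar : xstar ∈ X)
    (reps : ℝ) (hreps : 0 < reps)
    (g : ℕ → EuclideanSpace ℝ (Fin d)) (hg0 : g 0 ≠ 0)
    (hgbdd : ∀ k, ‖g k‖ ≤ L * d)
    (rbar : ℕ → ℝ)
    (hrbar : ∀ k, rbar k = max reps ((Finset.range (k + 1)).sup' Finset.nonempty_range_add_one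
      fun j => ‖x j - x 0‖))
    (G : ℕ → ℝ) (hG : ∀ k, G k = ∑ i ∈ Finset.range (k + 1), ‖g i‖ ^ 2)
    (η : ℕ → ℝ) (hη : ∀ k, η k = rbar k / Real.sqrt (G k))
    (μ : ℕ → ℝ) (hμ : ∀ k : ℕ, μ k = rbar k * Real.sqrt ((d : ℝ) / (k + 1)))
    (hrec : ∀ k, x (k + 1) = proj (x k - η k • g k))
    (sbar : ℕ → ℝ)
    (hsbar : ∀ k, sbar k = (Finset.range (k + 1)).sup' Finset.nonempty_range_add_one
      fun j => ‖x j - xstar‖)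
    (t : ℕ) (ht : 1 ≤ t)
    (xbar : EuclideanSpace ℝ (Fin d))
    (hxbar : xbar = (∑ k ∈ Finset.range t, rbar k)⁻¹ •
      ∑ k ∈ Finset.range t, rbar k • x k)
    (hnoise : |∑ k ∈ Finset.range t,
        rbar k * ⟪gradient (smoothed d f (μ k)) (x k) - g k, x k - xstar⟫| ≤
      8 * rbar (t - 1) * sbar (t - 1) *
        Real.sqrt (θ * G (t - 1) + 4 * L ^ 2 * (d : ℝ) ^ 2 * θ ^ 2)) :
    f xbar - f xstar ≤
      16 * θ * (rbar t + ‖x 0 - xstar‖) *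
        (Real.sqrt (G (t - 1)) + L * d + L * Real.sqrt ((d : ℝ) * t)) /
      (∑ k ∈ Finset.range t, rbar k / rbar t) := by
  classical
  have hd1 : (1 : ℝ) ≤ (d : ℝ) := by exact_mod_cast hd
  set C : NNReal := Real.toNNReal L with hCdef
  have hCL : (C : ℝ) = L := Real.coe_toNNReal L hL.le
  have hlipC : LipschitzWith C f := by
    refine LipschitzWith.of_dist_le_mul fun a b => ?_
    rw [Real.dist_eq, dist_eq_norm, hCL]
    exact hlip a b
  -- basic facts about rbar
  have hrb_pos : ∀ k, 0 < rbar k := fun k => by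
    rw [hrbar k]; exact lt_of_lt_of_le hreps (le_max_left _ _)
  have hxj_le : ∀ j k, j ≤ k → ‖x j - x 0‖ ≤ rbar k := fun j k hjk => by
    rw [hrbar k]
    exact le_trans (Finset.le_sup' (f := fun j => ‖x j - x 0‖)
      (Finset.mem_range.2 (by omega))) (le_max_right _ _)
  have hrb_mono : ∀ j k, j ≤ k → rbar j ≤ rbar k := fun j k hjk => by
    rw [hrbar j, hrbar k]
    refine max_le_max le_rfl ?_
    refine Finset.sup'_le _ _ fun i hi => ?_
    have hi' := Finset.mem_range.1 hi
    exact Finset.le_sup' (f := fun j => ‖x j - x 0‖) (Finset.mem_range.2 (by omega))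
  -- basic facts about G
  have hgnn : ∀ i : ℕ, (0:ℝ) ≤ ‖g i‖ ^ 2 := fun i => sq_nonneg _
  have hG_pos : ∀ k, 0 < G k := fun k => by
    rw [hG k]
    exact lt_of_lt_of_le (pow_pos (norm_pos_iff.2 hg0) 2)
      (Finset.single_le_sum (fun i _ => hgnn i) (Finset.mem_range.2 (by omega)))
  have hsG_pos : ∀ k, 0 < Real.sqrt (G k) := fun k => Real.sqrt_pos.2 (hG_pos k)
  have hG_mono : ∀ j k, j ≤ k → G j ≤ G k := fun j k hjk => by
    rw [hG j, hG k]
    exact Finset.sum_le_sum_of_subset_of_nonneg (by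
      intro i hi; have := Finset.mem_range.1 hi; exact Finset.mem_range.2 (by omega))
      (fun i _ _ => hgnn i)
  have hη_pos : ∀ k, 0 < η k := fun k => by
    rw [hη k]; exact div_pos (hrb_pos k) (hsG_pos k)
  have hμ_pos : ∀ k, 0 < μ k := fun k => by
    rw [hμ k]
    refine mul_pos (hrb_pos k) (Real.sqrt_pos.2 (div_pos (by linarith) (by positivity)))
  -- abbreviations
  set a : ℕ → ℝ := fun k => ‖x k - xstar‖ with ha
  have hann : ∀ k, 0 ≤ a k := fun k => norm_nonneg _
  have hsbar_ge : ∀ j k, j ≤ k → a j ≤ sbar k := fun j k hjk => by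
    rw [hsbar k]
    exact Finset.le_sup' (f := fun j => ‖x j - xstar‖) (Finset.mem_range.2 (by omega))
  have htriangle : ∀ k, a k ≤ ‖x k - x 0‖ + a 0 := fun k => by
    have := dist_triangle (x k) (x 0) xstar
    simpa [ha, dist_eq_norm] using this
  have hsbar_le : sbar (t - 1) ≤ rbar (t - 1) + a 0 := by
    rw [hsbar (t - 1)]
    refine Finset.sup'_le _ _ fun j hj => ?_
    have hj' := Finset.mem_range.1 hj
    have h1 := htriangle j
    have h2 := hxj_le j (t - 1) (by omega)
    have h3 : a j ≤ rbar (t-1) + a 0 := by linarith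
    exact h3
  have hsbar_nn : 0 ≤ sbar (t - 1) := le_trans (hann 0) (hsbar_ge 0 (t - 1) (by omega))
  -- the per-step descent inequality
  have hstep : ∀ k, rbar k * ⟪g k, x k - xstar⟫ ≤
      Real.sqrt (G k) * (a k ^ 2 - a (k + 1) ^ 2) / 2
        + rbar k ^ 2 / Real.sqrt (G k) * ‖g k‖ ^ 2 / 2 := by
    intro k
    have hproj := proj_nonexpansive hXconv proj hprojMem hprojMin (x k - η k • g k) hxstar
    rw [← hrec k] at hproj
    have hexp : ‖x k - η k • g k - xstar‖ ^ 2
        = a k ^ 2 - 2 * η k * ⟪g k, x k - xstar⟫ + η k ^ 2 * ‖g k‖ ^ 2 := by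
      have h1 : x k - η k • g k - xstar = (x k - xstar) - η k • g k := by abel
      rw [h1, norm_sub_sq_real, real_inner_smul_right, norm_smul]
      rw [real_inner_comm]
      simp [Real.norm_eq_abs, mul_pow, sq_abs, ha]
      ring
    have hsq : a (k + 1) ^ 2 ≤ ‖x k - η k • g k - xstar‖ ^ 2 :=
      pow_le_pow_left₀ (norm_nonneg _) hproj 2
    rw [hexp] at hsq
    have hquad : 2 * η k * ⟪g k, x k - xstar⟫ ≤ a k ^ 2 - a (k + 1) ^ 2 + η k ^ 2 * ‖g k‖ ^ 2 := by
      linarith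
    have e1 : η k * Real.sqrt (G k) = rbar k := by
      rw [hη k]; exact div_mul_cancel₀ _ (hsG_pos k).ne'
    have e2 : Real.sqrt (G k) * η k ^ 2 = rbar k ^ 2 / Real.sqrt (G k) := by
      have hsg := (hsG_pos k).ne'
      rw [hη k, div_pow]
      field_simp
    calc rbar k * ⟪g k, x k - xstar⟫
        = Real.sqrt (G k) / 2 * (2 * η k * ⟪g k, x k - xstar⟫) := by rw [← e1]; ring
      _ ≤ Real.sqrt (G k) / 2 * (a k ^ 2 - a (k + 1) ^ 2 + η k ^ 2 * ‖g k‖ ^ 2) :=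
          mul_le_mul_of_nonneg_left hquad (by positivity)
      _ = Real.sqrt (G k) * (a k ^ 2 - a (k + 1) ^ 2) / 2
          + (Real.sqrt (G k) * η k ^ 2) * ‖g k‖ ^ 2 / 2 := by ring
      _ = Real.sqrt (G k) * (a k ^ 2 - a (k + 1) ^ 2) / 2
          + rbar k ^ 2 / Real.sqrt (G k) * ‖g k‖ ^ 2 / 2 := by rw [e2]
  -- the per-step function-value inequality
  have hfstep : ∀ k, f (x k) - f xstar ≤ ⟪g k, x k - xstar⟫
      + ⟪gradient (smoothed d f (μ k)) (x k) - g k, x k - xstar⟫ + 2 * L * μ k := by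
    intro k
    have h1 := abs_smoothed_sub (d := d) hlipC (hμ_pos k).le (x k)
    have h2 := abs_smoothed_sub (d := d) hlipC (hμ_pos k).le xstar
    rw [hCL] at h1 h2
    have h3 : smoothed d f (μ k) (x k) - smoothed d f (μ k) xstar ≤
        ⟪gradient (smoothed d f (μ k)) (x k), x k - xstar⟫ :=
      convexOn_grad_ineq (smoothed_convexOn hlipC hconv (μ k))
        (smoothed_differentiableAt hlipC (hμ_pos k).ne' (x k)) xstar
    have h4 : ⟪gradient (smoothed d f (μ k)) (x k) - g k, x k - xstar⟫
        = ⟪gradient (smoothed d f (μ k)) (x k), x k - xstar⟫ - ⟪g k, x k - xstar⟫ :=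
      inner_sub_left _ _ _
    have h5 := abs_le.mp h1
    have h6 := abs_le.mp h2
    linarith [h5.1, h5.2, h6.1, h6.2]
  -- summed inequality
  have hsum1 : ∑ k ∈ range t, rbar k * (f (x k) - f xstar) ≤
      (∑ k ∈ range t, rbar k * ⟪g k, x k - xstar⟫)
      + (∑ k ∈ range t,
          rbar k * ⟪gradient (smoothed d f (μ k)) (x k) - g k, x k - xstar⟫)
      + ∑ k ∈ range t, rbar k * (2 * L * μ k) := by
    rw [← Finset.sum_add_distrib, ← Finset.sum_add_distrib]
    refine Finset.sum_le_sum fun k _ => ?_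
    have h7 := mul_le_mul_of_nonneg_left (hfstep k) (hrb_pos k).le
    nlinarith [h7]
  -- bound the gradient-sum part
  set sG := Real.sqrt (G (t - 1)) with hsGdef
  have hsGnn : 0 ≤ sG := Real.sqrt_nonneg _
  set rb1 := rbar (t - 1) with hrb1def
  set rbt := rbar t with hrbtdef
  have hrb1t : rb1 ≤ rbt := hrb_mono (t - 1) t (by omega)
  have hrb1_pos : 0 < rb1 := hrb_pos _
  have hrbt_pos : 0 < rbt := hrb_pos _
  set sb := sbar (t - 1) with hsbdef
  have hP : ∀ k, k < t → a k ^ 2 ≤ a 0 ^ 2 + rb1 * (sb + a 0) := by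
    intro k hk
    have habs : |a k - a 0| ≤ ‖x k - x 0‖ := by
      have h1 : (x k - xstar) - (x 0 - xstar) = x k - x 0 := by abel
      have := abs_norm_sub_norm_le (x k - xstar) (x 0 - xstar)
      rwa [h1] at this
    have h2 : ‖x k - x 0‖ ≤ rb1 := hxj_le k (t - 1) (by omega)
    have h3 : a k ≤ sb := hsbar_ge k (t - 1) (by omega)
    have h4 := abs_le.mp habs
    nlinarith [hann k, hann 0, h4.1, h4.2, hrb1_pos.le]
  have habel : ∑ k ∈ range t, Real.sqrt (G k) * (a k ^ 2 - a (k + 1) ^ 2) ≤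
      sG * (a 0 ^ 2 + rb1 * (sb + a 0) - a t ^ 2) := by
    have := abel_bound (fun k => Real.sqrt (G k)) (fun k => a k ^ 2)
      (a 0 ^ 2 + rb1 * (sb + a 0)) (Real.sqrt_nonneg _)
      (fun k => Real.sqrt_le_sqrt (hG_mono k (k + 1) (by omega))) t ht hP
    exact this
  have hAt : a 0 ^ 2 - a t ^ 2 ≤ 2 * a 0 * rbt := by
    have h1 : a 0 ≤ a t + rbt := by
      have h2 := dist_triangle (x 0) (x t) xstar
      have h3 : ‖x t - x 0‖ ≤ rbt := hxj_le t t le_rfl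
      have h4 : a 0 ≤ ‖x t - x 0‖ + a t := by
        simpa [ha, dist_eq_norm, norm_sub_rev (x 0) (x t)] using h2
      linarith
    rcases le_total (a 0) (a t) with h | h
    · nlinarith [hann 0, hrbt_pos.le]
    · nlinarith [hann 0, hann t, hrbt_pos.le]
  have hT1a : ∑ k ∈ range t, Real.sqrt (G k) * (a k ^ 2 - a (k + 1) ^ 2) / 2 ≤
      sG * (rb1 * (sb + a 0) + 2 * a 0 * rbt) / 2 := by
    rw [← Finset.sum_div]
    have h5 : sG * (a 0 ^ 2 + rb1 * (sb + a 0) - a t ^ 2)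
        ≤ sG * (rb1 * (sb + a 0) + 2 * a 0 * rbt) := by
      refine mul_le_mul_of_nonneg_left ?_ hsGnn
      linarith [hAt]
    linarith [habel]
  have hT1b : ∑ k ∈ range t, rbar k ^ 2 / Real.sqrt (G k) * ‖g k‖ ^ 2 / 2 ≤
      rb1 ^ 2 * sG := by
    have hterm : ∀ k ∈ range t, rbar k ^ 2 / Real.sqrt (G k) * ‖g k‖ ^ 2 / 2 ≤
        rb1 ^ 2 / 2 * (‖g k‖ ^ 2 / Real.sqrt (G k)) := by
      intro k hk
      have hk' := Finset.mem_range.1 hk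
      have h1 : rbar k ≤ rb1 := hrb_mono k (t - 1) (by omega)
      have h2 : rbar k ^ 2 ≤ rb1 ^ 2 := by nlinarith [(hrb_pos k).le]
      have h3 : 0 ≤ ‖g k‖ ^ 2 / Real.sqrt (G k) := by positivity
      calc rbar k ^ 2 / Real.sqrt (G k) * ‖g k‖ ^ 2 / 2
          = rbar k ^ 2 * (‖g k‖ ^ 2 / Real.sqrt (G k)) / 2 := by ring
        _ ≤ rb1 ^ 2 * (‖g k‖ ^ 2 / Real.sqrt (G k)) / 2 := by
            have := mul_le_mul_of_nonneg_right h2 h3; linarith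
        _ = rb1 ^ 2 / 2 * (‖g k‖ ^ 2 / Real.sqrt (G k)) := by ring
    have hsum2 := Finset.sum_le_sum hterm
    have hdiv : ∑ k ∈ range t, ‖g k‖ ^ 2 / Real.sqrt (G k) ≤ 2 * sG := by
      have h6 := sum_div_sqrt_le (fun i => ‖g i‖ ^ 2) hgnn
        (pow_pos (norm_pos_iff.2 hg0) 2) t ht
      have h7 : ∀ k : ℕ, Real.sqrt (∑ i ∈ range (k + 1), ‖g i‖ ^ 2) = Real.sqrt (G k) := by
        intro k; rw [hG k]
      have h8 : Real.sqrt (∑ i ∈ range t, ‖g i‖ ^ 2) = sG := by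
        rw [hsGdef, hG (t - 1), Nat.sub_add_cancel ht]
      calc ∑ k ∈ range t, ‖g k‖ ^ 2 / Real.sqrt (G k)
          = ∑ k ∈ range t, ‖g k‖ ^ 2 / Real.sqrt (∑ i ∈ range (k + 1), ‖g i‖ ^ 2) := by
            refine Finset.sum_congr rfl fun k _ => ?_; rw [h7]
        _ ≤ 2 * Real.sqrt (∑ i ∈ range t, ‖g i‖ ^ 2) := h6
        _ = 2 * sG := by rw [h8]
    calc ∑ k ∈ range t, rbar k ^ 2 / Real.sqrt (G k) * ‖g k‖ ^ 2 / 2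
        ≤ ∑ k ∈ range t, rb1 ^ 2 / 2 * (‖g k‖ ^ 2 / Real.sqrt (G k)) := hsum2
      _ = rb1 ^ 2 / 2 * ∑ k ∈ range t, ‖g k‖ ^ 2 / Real.sqrt (G k) := by
          rw [Finset.mul_sum]
      _ ≤ rb1 ^ 2 / 2 * (2 * sG) := by
          refine mul_le_mul_of_nonneg_left hdiv (by positivity)
      _ = rb1 ^ 2 * sG := by ring
  have hT1 : ∑ k ∈ range t, rbar k * ⟪g k, x k - xstar⟫ ≤
      sG * (rb1 * (sb + a 0) + 2 * a 0 * rbt) / 2 + rb1 ^ 2 * sG := by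
    calc ∑ k ∈ range t, rbar k * ⟪g k, x k - xstar⟫
        ≤ ∑ k ∈ range t, (Real.sqrt (G k) * (a k ^ 2 - a (k + 1) ^ 2) / 2
          + rbar k ^ 2 / Real.sqrt (G k) * ‖g k‖ ^ 2 / 2) :=
          Finset.sum_le_sum fun k _ => hstep k
      _ = (∑ k ∈ range t, Real.sqrt (G k) * (a k ^ 2 - a (k + 1) ^ 2) / 2)
          + ∑ k ∈ range t, rbar k ^ 2 / Real.sqrt (G k) * ‖g k‖ ^ 2 / 2 :=
          Finset.sum_add_distrib
      _ ≤ _ := by linarith [hT1a, hT1b]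
  -- noise bound
  have hT2 : ∑ k ∈ range t,
      rbar k * ⟪gradient (smoothed d f (μ k)) (x k) - g k, x k - xstar⟫ ≤
      8 * rb1 * sb * (θ * sG + 2 * L * d * θ) := by
    refine le_trans (le_abs_self _) (le_trans hnoise ?_)
    have hGnn := (hG_pos (t - 1)).le
    have hsq := Real.sq_sqrt hGnn
    have h8 : Real.sqrt (θ * G (t - 1) + 4 * L ^ 2 * (d : ℝ) ^ 2 * θ ^ 2) ≤
        θ * sG + 2 * L * d * θ := by
      rw [Real.sqrt_le_iff]
      constructor
      · positivity
      · rw [hsGdef]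
        have c1 : (0:ℝ) ≤ (θ ^ 2 - θ) * G (t - 1) :=
          mul_nonneg (by nlinarith) hGnn
        have c2 : (0:ℝ) ≤ 4 * L * (d:ℝ) * θ ^ 2 * Real.sqrt (G (t - 1)) := by positivity
        nlinarith [hsq, c1, c2]
    have h9 : 0 ≤ 8 * rb1 * sb := by positivity
    calc 8 * rb1 * sb * Real.sqrt (θ * G (t - 1) + 4 * L ^ 2 * (d : ℝ) ^ 2 * θ ^ 2)
        ≤ 8 * rb1 * sb * (θ * sG + 2 * L * d * θ) := mul_le_mul_of_nonneg_left h8 h9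
      _ = _ := by ring
  -- smoothing bound
  set sdt := Real.sqrt ((d : ℝ) * t) with hsdtdef
  have hsdtnn : 0 ≤ sdt := Real.sqrt_nonneg _
  have hT3 : ∑ k ∈ range t, rbar k * (2 * L * μ k) ≤ 4 * L * sdt * rb1 ^ 2 := by
    have hterm : ∀ k ∈ range t, rbar k * (2 * L * μ k) ≤
        2 * L * Real.sqrt d * rb1 ^ 2 * (1 / Real.sqrt ((k : ℝ) + 1)) := by
      intro k hk
      have hk' := Finset.mem_range.1 hk
      have h1 : rbar k ≤ rb1 := hrb_mono k (t - 1) (by omega)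
      have h2 : Real.sqrt ((d : ℝ) / ((k : ℝ) + 1)) =
          Real.sqrt d / Real.sqrt ((k : ℝ) + 1) := Real.sqrt_div (by linarith) _
      have h3 : 0 < Real.sqrt ((k : ℝ) + 1) := Real.sqrt_pos.2 (by positivity)
      rw [hμ k, h2]
      have h4 : rbar k * (2 * L * (rbar k * (Real.sqrt d / Real.sqrt ((k : ℝ) + 1))))
          = 2 * L * Real.sqrt d * rbar k ^ 2 * (1 / Real.sqrt ((k : ℝ) + 1)) := by
        field_simp
      rw [h4]
      have h5 : rbar k ^ 2 ≤ rb1 ^ 2 := by nlinarith [(hrb_pos k).le]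
      have h6 : (0:ℝ) ≤ 2 * L * Real.sqrt d := by positivity
      have h7 : (0:ℝ) ≤ 1 / Real.sqrt ((k : ℝ) + 1) := by positivity
      nlinarith [mul_le_mul_of_nonneg_left h5 h6, mul_le_mul_of_nonneg_right
        (mul_le_mul_of_nonneg_left h5 h6) h7]
    calc ∑ k ∈ range t, rbar k * (2 * L * μ k)
        ≤ ∑ k ∈ range t, 2 * L * Real.sqrt d * rb1 ^ 2 * (1 / Real.sqrt ((k : ℝ) + 1)) :=
          Finset.sum_le_sum hterm
      _ = 2 * L * Real.sqrt d * rb1 ^ 2 * ∑ k ∈ range t, 1 / Real.sqrt ((k : ℝ) + 1) := by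
          rw [Finset.mul_sum]
      _ ≤ 2 * L * Real.sqrt d * rb1 ^ 2 * (2 * Real.sqrt t) := by
          refine mul_le_mul_of_nonneg_left (sum_inv_sqrt_le t ht) (by positivity)
      _ = 4 * L * (Real.sqrt d * Real.sqrt t) * rb1 ^ 2 := by ring
      _ = 4 * L * sdt * rb1 ^ 2 := by
          rw [hsdtdef, Real.sqrt_mul (by positivity : (0:ℝ) ≤ (d:ℝ))]
  -- combine everything
  have hkey : ∑ k ∈ range t, rbar k * (f (x k) - f xstar) ≤
      16 * θ * (rbt + a 0) * (sG + L * d + L * sdt) * rbt := by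
    have hsb_le' : sb ≤ rbt + a 0 := by linarith [hsbar_le, hrb1t]
    have hb1 : sG * (rb1 * (sb + a 0) + 2 * a 0 * rbt) / 2 ≤ 2 * sG * (rbt * (rbt + a 0)) := by
      have hinner : rb1 * (sb + a 0) + 2 * a 0 * rbt ≤ 4 * (rbt * (rbt + a 0)) := by
        have h1 : rb1 * (sb + a 0) ≤ rbt * (rbt + 2 * a 0) := by
          have h2 : sb + a 0 ≤ rbt + 2 * a 0 := by linarith [hsb_le']
          have h3 : (0:ℝ) ≤ sb + a 0 := by linarith [hsbar_nn, hann 0]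
          exact mul_le_mul hrb1t h2 h3 hrbt_pos.le
        nlinarith [h1, sq_nonneg rbt, mul_nonneg (hann 0) hrbt_pos.le]
      nlinarith [mul_le_mul_of_nonneg_left hinner hsGnn]
    have hb2 : rb1 ^ 2 * sG ≤ sG * (rbt * (rbt + a 0)) := by
      have h1 : rb1 ^ 2 ≤ rbt * (rbt + a 0) := by
        nlinarith [mul_le_mul hrb1t hrb1t hrb1_pos.le hrbt_pos.le,
          mul_nonneg hrbt_pos.le (hann 0)]
      have h2 := mul_le_mul_of_nonneg_left h1 hsGnn
      linarith
    have hb3 : 8 * rb1 * sb * (θ * sG + 2 * L * d * θ) ≤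
        8 * (rbt * (rbt + a 0)) * (θ * sG + 2 * L * d * θ) := by
      have h1 : rb1 * sb ≤ rbt * (rbt + a 0) := by
        exact mul_le_mul hrb1t (by linarith [hsb_le']) hsbar_nn hrbt_pos.le
      have h2 : (0:ℝ) ≤ θ * sG + 2 * L * d * θ := by positivity
      nlinarith [mul_le_mul_of_nonneg_right h1 h2]
    have hb4 : 4 * L * sdt * rb1 ^ 2 ≤ 4 * L * sdt * (rbt * (rbt + a 0)) := by
      have h1 : rb1 ^ 2 ≤ rbt * (rbt + a 0) := by
        nlinarith [mul_le_mul hrb1t hrb1t hrb1_pos.le hrbt_pos.le,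
          mul_nonneg hrbt_pos.le (hann 0)]
      nlinarith [mul_le_mul_of_nonneg_left h1 (by positivity : (0:ℝ) ≤ 4 * L * sdt)]
    have hcoef : (2 * sG + sG + 8 * (θ * sG + 2 * L * d * θ) + 4 * L * sdt)
        ≤ 16 * θ * (sG + L * d + L * sdt) := by
      have hLd : (0:ℝ) ≤ L * d := by positivity
      have hLsdt : (0:ℝ) ≤ L * sdt := by positivity
      nlinarith [hsGnn, hLd, hLsdt]
    have hRnn : (0:ℝ) ≤ rbt * (rbt + a 0) := by positivity
    calc ∑ k ∈ range t, rbar k * (f (x k) - f xstar)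
        ≤ (sG * (rb1 * (sb + a 0) + 2 * a 0 * rbt) / 2 + rb1 ^ 2 * sG)
          + 8 * rb1 * sb * (θ * sG + 2 * L * d * θ) + 4 * L * sdt * rb1 ^ 2 := by
          linarith [hsum1, hT1, hT2, hT3]
      _ ≤ 2 * sG * (rbt * (rbt + a 0)) + sG * (rbt * (rbt + a 0))
          + 8 * (rbt * (rbt + a 0)) * (θ * sG + 2 * L * d * θ)
          + 4 * L * sdt * (rbt * (rbt + a 0)) := by linarith [hb1, hb2, hb3, hb4]
      _ = (rbt * (rbt + a 0)) * (2 * sG + sG + 8 * (θ * sG + 2 * L * d * θ) + 4 * L * sdt) := by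
          ring
      _ ≤ (rbt * (rbt + a 0)) * (16 * θ * (sG + L * d + L * sdt)) :=
          mul_le_mul_of_nonneg_left hcoef hRnn
      _ = 16 * θ * (rbt + a 0) * (sG + L * d + L * sdt) * rbt := by ring
  -- Jensen step
  set W := ∑ k ∈ range t, rbar k with hW
  have hW_pos : 0 < W := Finset.sum_pos (fun k _ => hrb_pos k)
    (Finset.nonempty_range_iff.2 (by omega))
  have hxbar' : xbar = ∑ k ∈ range t, (rbar k / W) • x k := by
    rw [hxbar, Finset.smul_sum]
    refine Finset.sum_congr rfl fun k _ => ?_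
    rw [smul_smul, div_eq_inv_mul]
  have hwsum : ∑ k ∈ range t, rbar k / W = 1 := by
    rw [← Finset.sum_div, div_self hW_pos.ne']
  have hjensen : f xbar ≤ ∑ k ∈ range t, (rbar k / W) * f (x k) := by
    rw [hxbar']
    have := hconv.map_sum_le (t := Finset.range t) (w := fun k => rbar k / W) (p := x)
      (fun k _ => div_nonneg (hrb_pos k).le hW_pos.le) hwsum (fun k _ => Set.mem_univ _)
    simpa [smul_eq_mul] using this
  have hfinal1 : f xbar - f xstar ≤ W⁻¹ * ∑ k ∈ range t, rbar k * (f (x k) - f xstar) := by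
    have h1 : (∑ k ∈ range t, (rbar k / W) * f (x k)) - f xstar
        = W⁻¹ * ∑ k ∈ range t, rbar k * (f (x k) - f xstar) := by
      rw [Finset.mul_sum]
      nth_rewrite 1 [show f xstar = (∑ k ∈ range t, rbar k / W) * f xstar by
        rw [hwsum, one_mul]]
      rw [Finset.sum_mul, ← Finset.sum_sub_distrib]
      refine Finset.sum_congr rfl fun k _ => ?_
      field_simp
    linarith [hjensen]
  -- conclude
  have hden : (∑ k ∈ range t, rbar k / rbar t) = W / rbt := by
    rw [← Finset.sum_div]
  rw [hden, div_div_eq_mul_div]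
  have h2 : W⁻¹ * ∑ k ∈ range t, rbar k * (f (x k) - f xstar) ≤
      W⁻¹ * (16 * θ * (rbt + a 0) * (sG + L * d + L * sdt) * rbt) :=
    mul_le_mul_of_nonneg_left hkey (by positivity)
  have h3 : W⁻¹ * (16 * θ * (rbt + a 0) * (sG + L * d + L * sdt) * rbt)
      = 16 * θ * (rbt + a 0) * (sG + L * d + L * sdt) * rbt / W := by
    rw [div_eq_inv_mul]
  have h4 : f xbar - f xstar ≤
      16 * θ * (rbt + a 0) * (sG + L * d + L * sdt) * rbt / W := by
    linarith [hfinal1, h2, h3.le, h3.ge]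
  exact h4
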